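/- Let $\alpha = (\alpha_1, \dots, \alpha_n) \in (0,\infty)^n$ and $D_\alpha = \{z \in \mathbb{C}^n : |z_1|^{\alpha_1} \cdots |z_n|^{\alpha_n} < 1\}$. Let $a \in D_\alpha$ with $a_1 \cdots a_{n-1} \neq 0$ and $a_n = 0$, and set $r = \alpha_n$. Then for $X \in \mathbb{C}^n$, the Kobayashi–Royden metric satisfies $\kappa_{D_\alpha}(a; X) \leq \big( |a_1|^{\alpha_1} \cdots |a_{n-1}|^{\alpha_{n-1}} |X_n|^{\alpha_n} \big)^{1/r}$. -/

import Mathlib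

open scoped Real

/-- The Kobayashi–Royden pseudometric of a domain `D ⊂ ℂⁿ`. -/
noncomputable def kobayashiRoyden {n : ℕ} (D : Set (Fin n → ℂ)) (a X : Fin n → ℂ) : ℝ :=
  sInf {t : ℝ | 0 < t ∧ ∃ φ : ℂ → (Fin n → ℂ), DifferentiableOn ℂ φ (Metric.ball 0 1) ∧
    (∀ l ∈ Metric.ball (0 : ℂ) 1, φ l ∈ D) ∧ φ 0 = a ∧
    t • derivWithin φ (Metric.ball 0 1) 0 = X}

set_option maxHeartbeats 1000000 in
/-- For the elementary Reinhardt domain `D_α = {z : ∏ |z j|^(α j) < 1}` with all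
`α j > 0`, a point `a ∈ D_α` with `a j ≠ 0` for `j < n-1` and `a (n-1) = 0`, and
`r = α (n-1)`, the Kobayashi–Royden metric satisfies
`κ_{D_α}(a;X) ≤ (∏_{j<n-1} |a j|^(α j) · |X (n-1)|^(α (n-1)))^(1/r)`. -/
theorem kobayashi_upper_bound_elementary_Reinhardt (n : ℕ) (hn : 2 ≤ n)
    (α : Fin n → ℝ) (hα : ∀ j, 0 < α j)
    (last : Fin n) (hlast : (last : ℕ) = n - 1)
    (a : Fin n → ℂ) (ha : ∀ j : Fin n, (j : ℕ) < n - 1 → a j ≠ 0) (han : a last = 0)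
    (haD : a ∈ {z : Fin n → ℂ | ∏ j, ‖z j‖ ^ (α j) < 1})
    (X : Fin n → ℂ) :
    kobayashiRoyden {z : Fin n → ℂ | ∏ j, ‖z j‖ ^ (α j) < 1} a X ≤
      ((∏ j ∈ Finset.univ.filter (fun j : Fin n => (j : ℕ) < n - 1), ‖a j‖ ^ (α j)) *
        ‖X last‖ ^ (α last)) ^ (1 / α last) := by
  classical
  have hr : 0 < α last := hα last
  set M := ∏ j ∈ Finset.univ.filter (fun j : Fin n => (j : ℕ) < n - 1), ‖a j‖ ^ (α j) with hMdef
  have hfe : (Finset.univ.filter fun j : Fin n => (j : ℕ) < n - 1) = Finset.univ.erase last := by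
    ext j
    have hj := j.isLt
    simp only [Finset.mem_filter, Finset.mem_erase, Finset.mem_univ, true_and, and_true,
      Ne, Fin.ext_iff, hlast]
    omega
  have hane : ∀ j : Fin n, j ≠ last → a j ≠ 0 := by
    intro j hj
    apply ha
    have hj' := j.isLt
    have : (j : ℕ) ≠ n - 1 := by
      intro h; exact hj (Fin.ext (by rw [h, hlast]))
    omega
  have hM0 : 0 < M := by
    rw [hMdef, hfe]
    exact Finset.prod_pos fun j hj =>
      Real.rpow_pos_of_pos (norm_pos_iff.mpr (hane j (Finset.mem_erase.mp hj).1)) _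
  set R := (M * ‖X last‖ ^ (α last)) ^ (1 / α last) with hRdef
  have hR0 : 0 ≤ R := Real.rpow_nonneg (by positivity) _
  clear_value M R
  have key : ∀ t : ℝ, R < t → (0 < t ∧ ∃ φ : ℂ → (Fin n → ℂ),
      DifferentiableOn ℂ φ (Metric.ball 0 1) ∧
      (∀ l ∈ Metric.ball (0 : ℂ) 1,
        φ l ∈ {z : Fin n → ℂ | ∏ j, ‖z j‖ ^ (α j) < 1}) ∧ φ 0 = a ∧
      t • derivWithin φ (Metric.ball 0 1) 0 = X) := by
    intro t ht
    have ht0 : 0 < t := lt_of_le_of_lt hR0 ht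
    have htC : (t : ℂ) ≠ 0 := by exact_mod_cast ht0.ne'
    have hrC : ((α last : ℝ) : ℂ) ≠ 0 := by exact_mod_cast hr.ne'
    set c : ℂ := X last / (t : ℂ) with hc
    set β : Fin n → ℂ := fun j => X j / ((t : ℂ) * a j) with hβ
    set Sc : ℂ := ∑ j ∈ Finset.univ.erase last, (α j : ℂ) * β j with hScdef
    set γ : ℂ := -Sc / ((α last : ℝ) : ℂ) with hγ
    have hcancel : ((α last : ℝ) : ℂ) * γ + Sc = 0 := by
      rw [hγ]; field_simp; ring
    set φ : ℂ → Fin n → ℂ := fun l j => if j = last then c * l * Complex.exp (γ * l)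
      else a j * Complex.exp (β j * l) with hφ
    clear_value c β Sc γ φ
    refine ⟨ht0, φ, ?_, ?_, ?_, ?_⟩
    · apply Differentiable.differentiableOn
      refine differentiable_pi.mpr fun j => ?_
      by_cases hj : j = last
      · simp only [hφ, hj, if_true]
        exact (differentiable_id.const_mul c).mul ((differentiable_id.const_mul γ).cexp)
      · simp only [hφ, hj, if_false]
        exact ((differentiable_id.const_mul (β j)).cexp).const_mul (a j)
    · intro l hl
      have hln : ‖l‖ < 1 := by simpa [Metric.mem_ball] using hl
      simp only [Set.mem_setOf_eq]
      -- exponent cancellation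
      have hE : (γ * l).re * α last
          + ∑ j ∈ Finset.univ.erase last, (β j * l).re * α j = 0 := by
        have h0 : ((α last : ℝ) : ℂ) * (γ * l)
            + ∑ j ∈ Finset.univ.erase last, (α j : ℂ) * (β j * l) = 0 := by
          have h1 : ∑ j ∈ Finset.univ.erase last, (α j : ℂ) * (β j * l) = Sc * l := by
            rw [hScdef, Finset.sum_mul]
            exact Finset.sum_congr rfl fun j _ => (mul_assoc _ _ _).symm
          rw [h1, show ((α last : ℝ) : ℂ) * (γ * l) = (((α last : ℝ) : ℂ) * γ) * l by ring,
            ← add_mul, hcancel, zero_mul]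
        have h2 := congrArg Complex.re h0
        simp only [Complex.add_re, Complex.re_sum, Complex.re_ofReal_mul, Complex.zero_re] at h2
        calc (γ * l).re * α last + ∑ j ∈ Finset.univ.erase last, (β j * l).re * α j
            = α last * (γ * l).re + ∑ j ∈ Finset.univ.erase last, α j * (β j * l).re := by
              rw [mul_comm]; congr 1; exact Finset.sum_congr rfl fun j _ => mul_comm _ _
          _ = 0 := h2
      have hprod : ∏ j, ‖φ l j‖ ^ (α j)
          = (M * ‖c‖ ^ (α last)) * ‖l‖ ^ (α last)
            * Real.exp ((γ * l).re * α last
                + ∑ j ∈ Finset.univ.erase last, (β j * l).re * α j) := by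
        rw [← Finset.mul_prod_erase Finset.univ _ (Finset.mem_univ last)]
        have hA : ‖φ l last‖ ^ (α last)
            = ‖c‖ ^ (α last) * ‖l‖ ^ (α last) * Real.exp ((γ * l).re * α last) := by
          simp only [hφ, if_true]
          rw [norm_mul, norm_mul, Complex.norm_exp,
            Real.mul_rpow (by positivity) (Real.exp_nonneg _),
            Real.mul_rpow (norm_nonneg _) (norm_nonneg _), ← Real.exp_mul]
        have hB : ∏ j ∈ Finset.univ.erase last, ‖φ l j‖ ^ (α j)
            = M * Real.exp (∑ j ∈ Finset.univ.erase last, (β j * l).re * α j) := by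
          have hterm : ∀ j ∈ Finset.univ.erase last, ‖φ l j‖ ^ (α j)
              = ‖a j‖ ^ (α j) * Real.exp ((β j * l).re * α j) := by
            intro j hj
            have hjne : j ≠ last := (Finset.mem_erase.mp hj).1
            simp only [hφ, hjne, if_false]
            rw [norm_mul, Complex.norm_exp,
              Real.mul_rpow (norm_nonneg _) (Real.exp_nonneg _), ← Real.exp_mul]
          rw [Finset.prod_congr rfl hterm, Finset.prod_mul_distrib, ← Real.exp_sum,
            hMdef, hfe]
        rw [hA, hB, Real.exp_add]
        ring
      rw [hprod, hE, Real.exp_zero, mul_one]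
      -- final estimate
      have hcn : ‖c‖ = ‖X last‖ / t := by
        rw [hc, norm_div]
        simp [Complex.norm_real, Real.norm_eq_abs, abs_of_pos ht0]
      have htr : M * ‖X last‖ ^ (α last) < t ^ (α last) := by
        have h1 : R ^ (α last) < t ^ (α last) := Real.rpow_lt_rpow hR0 ht hr
        rwa [hRdef, ← Real.rpow_mul (by positivity), one_div,
          inv_mul_cancel₀ hr.ne', Real.rpow_one] at h1
      have hMc : M * ‖c‖ ^ (α last) < 1 := by
        rw [hcn, Real.div_rpow (norm_nonneg _) ht0.le, ← mul_div_assoc, div_lt_one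
          (Real.rpow_pos_of_pos ht0 _)]
        exact htr
      have hl1 : ‖l‖ ^ (α last) ≤ 1 :=
        Real.rpow_le_one (norm_nonneg _) hln.le hr.le
      calc (M * ‖c‖ ^ (α last)) * ‖l‖ ^ (α last) ≤ M * ‖c‖ ^ (α last) :=
            mul_le_of_le_one_right (by positivity) hl1
        _ < 1 := hMc
    · funext j
      by_cases hj : j = last
      · simp [hφ, hj, han]
      · simp [hφ, hj]
    · have hv : HasDerivAt φ (fun j => if j = last then c else a j * β j) 0 := by
        rw [hasDerivAt_pi]
        intro j
        by_cases hj : j = last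
        · simp only [hφ, hj, if_true]
          have h1 : HasDerivAt (fun l : ℂ => c * l) c 0 := by
            simpa using (hasDerivAt_id (0 : ℂ)).const_mul c
          have h2 : HasDerivAt (fun l : ℂ => Complex.exp (γ * l)) γ 0 := by
            simpa using ((hasDerivAt_id (0 : ℂ)).const_mul γ).cexp
          exact (h1.mul h2).congr_deriv (by simp)
        · simp only [hφ, hj, if_false]
          have h2 : HasDerivAt (fun l : ℂ => Complex.exp (β j * l)) (β j) 0 := by
            simpa using ((hasDerivAt_id (0 : ℂ)).const_mul (β j)).cexp
          simpa using h2.const_mul (a j)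
      have hder : derivWithin φ (Metric.ball 0 1) 0
          = fun j => if j = last then c else a j * β j :=
        hv.hasDerivWithinAt.derivWithin
          (Metric.isOpen_ball.uniqueDiffWithinAt (Metric.mem_ball_self one_pos))
      rw [hder]
      funext j
      simp only [Pi.smul_apply, Complex.real_smul]
      by_cases hj : j = last
      · rw [if_pos hj, hj, hc, mul_div_cancel₀ _ htC]
      · rw [if_neg hj, hβ]
        field_simp [hane j hj]
  unfold kobayashiRoyden
  refine le_of_forall_pos_le_add fun ε hε => ?_
  have hb : BddBelow {t : ℝ | 0 < t ∧ ∃ φ : ℂ → (Fin n → ℂ),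
      DifferentiableOn ℂ φ (Metric.ball 0 1) ∧
      (∀ l ∈ Metric.ball (0 : ℂ) 1,
        φ l ∈ {z : Fin n → ℂ | ∏ j, ‖z j‖ ^ (α j) < 1}) ∧ φ 0 = a ∧
      t • derivWithin φ (Metric.ball 0 1) 0 = X} := ⟨0, fun s hs => hs.1.le⟩
  exact csInf_le hb (key (R + ε) (by linarith))
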